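/- Let κ be a weakly compact cardinal. Suppose given: a subset B of κ of cardinality κ; a κ-sequence of ordinals ⟨γ_i : i < κ⟩ such that 0 < γ_i < κ for all i < κ; and a κ-sequence of functions ⟨F_i : i < κ⟩ with F_i : κ → γ_i. Then there is a subset B' of B of cardinality κ such that each F_i is constant on a tail of B': for every i < κ there exist η < κ and ξ < γ_i such that F_i(α) = ξ whenever α ∈ B' and α ≥ η. -/

import Mathlib

open Cardinal

/-- The restriction of the tree order to the predecessors of `t`. -/
def segRel {T : Type u} (lt : T → T → Prop) (t : T) :
    {y : T // lt y t} → {y : T // lt y t} → Prop :=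
  fun a b => lt a.1 b.1

/-- A tree is a type with a transitive binary relation such that the
set of predecessors of any element is well-ordered by the relation. -/
structure IsTreeOrder {T : Type u} (lt : T → T → Prop) : Prop where
  trans : Transitive lt
  wo : ∀ t : T, IsWellOrder {y : T // lt y t} (segRel lt t)

/-- The rank of an element of a tree: the order type of its set of predecessors. -/
noncomputable def treeRank {T : Type u} {lt : T → T → Prop} (h : IsTreeOrder lt) (t : T) :
    Ordinal.{u} :=
  @Ordinal.type _ (segRel lt t) (h.wo t)

/-- A `κ`-tree: every element has rank `< κ`, and each level below `κ` is
nonempty of cardinality `< κ`. -/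
def IsKappaTree {T : Type 1} {lt : T → T → Prop} (h : IsTreeOrder lt) (κ : Cardinal.{0}) :
    Prop :=
  (∀ t, treeRank h t < Ordinal.lift.{1} κ.ord) ∧
  ∀ α < Ordinal.lift.{1} κ.ord,
    ({t | treeRank h t = α}.Nonempty ∧ #{t | treeRank h t = α} < Cardinal.lift.{1} κ)

/-- A branch of a `κ`-tree: a downward closed set meeting each level `T_α`
(`α < κ`) in exactly one element. -/
def IsTreeBranch {T : Type 1} {lt : T → T → Prop} (h : IsTreeOrder lt) (κ : Cardinal.{0})
    (b : Set T) : Prop :=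
  (∀ x ∈ b, ∀ y, lt y x → y ∈ b) ∧
  ∀ α < Ordinal.lift.{1} κ.ord, ∃! t, t ∈ b ∧ treeRank h t = α

/-- `κ` is strongly inaccessible: uncountable, regular, and a strong limit. -/
def IsStronglyInaccessible (κ : Cardinal.{0}) : Prop :=
  ℵ₀ < κ ∧ κ.IsRegular ∧ κ.IsStrongLimit

/-- `κ` is weakly compact iff it is strongly inaccessible and every `κ`-tree has a branch. -/
def IsWeaklyCompact (κ : Cardinal.{0}) : Prop :=
  IsStronglyInaccessible κ ∧
  ∀ (T : Type 1) (lt : T → T → Prop) (h : IsTreeOrder lt),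
    IsKappaTree h κ → ∃ b : Set T, IsTreeBranch h κ b

namespace BasicModuleAux

open Cardinal Ordinal

/-- Nodes of the tree: a domain `α < κ.ord` together with a function that is
zero outside `α` and agrees below `α` with `F · β` for some `β ∈ B`, `β ≥ α`. -/
def Node (κ : Cardinal.{0}) (B : Set Ordinal.{0})
    (F : Ordinal.{0} → Ordinal.{0} → Ordinal.{0}) : Type 1 :=
  { p : Ordinal.{0} × (Ordinal.{0} → Ordinal.{0}) //
    p.1 < κ.ord ∧ (∀ i, ¬ i < p.1 → p.2 i = 0) ∧
      ∃ β ∈ B, p.1 ≤ β ∧ ∀ i < p.1, p.2 i = F i β }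

variable {κ : Cardinal.{0}} {B : Set Ordinal.{0}}
  {F : Ordinal.{0} → Ordinal.{0} → Ordinal.{0}}

/-- The tree order: proper end-extension. -/
def nlt (κ : Cardinal.{0}) (B : Set Ordinal.{0})
    (F : Ordinal.{0} → Ordinal.{0} → Ordinal.{0}) :
    Node κ B F → Node κ B F → Prop :=
  fun a b => a.1.1 < b.1.1 ∧ ∀ i < a.1.1, a.1.2 i = b.1.2 i

theorem node_ext {a b : Node κ B F} (h1 : a.1.1 = b.1.1)
    (h2 : ∀ i < a.1.1, a.1.2 i = b.1.2 i) : a = b := by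
  apply Subtype.ext
  refine Prod.ext h1 (funext fun i => ?_)
  by_cases hi : i < a.1.1
  · exact h2 i hi
  · rw [a.2.2.1 i hi, b.2.2.1 i (h1 ▸ hi)]

/-- The restriction of a node to a smaller domain. -/
noncomputable def restrictNode (t : Node κ B F) (α : Ordinal.{0}) (hα : α < t.1.1) :
    Node κ B F :=
  ⟨(α, fun i => if i < α then t.1.2 i else 0), hα.trans t.2.1, fun i hi => if_neg hi, by
    obtain ⟨β, hβB, hβ, hFa⟩ := t.2.2.2
    refine ⟨β, hβB, hα.le.trans hβ, fun i hi => ?_⟩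
    show (if i < α then t.1.2 i else 0) = F i β
    rw [if_pos hi, hFa i (hi.trans hα)]⟩

theorem restrictNode_lt (t : Node κ B F) (α : Ordinal.{0}) (hα : α < t.1.1) :
    nlt κ B F (restrictNode t α hα) t :=
  ⟨hα, fun i hi => if_pos hi⟩

/-- The set of predecessors of `t` is order isomorphic to the ordinals below
the domain of `t`. -/
noncomputable def segIso (t : Node κ B F) :
    segRel (nlt κ B F) t ≃r Subrel ((· < ·) : Ordinal.{0} → Ordinal.{0} → Prop)
      (Set.Iio t.1.1) where
  toFun y := ⟨y.1.1.1, y.2.1⟩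
  invFun β := ⟨restrictNode t β.1 β.2, restrictNode_lt t β.1 β.2⟩
  left_inv y := by
    apply Subtype.ext
    refine node_ext rfl fun i hi => ?_
    show (if i < y.1.1.1 then t.1.2 i else 0) = y.1.1.2 i
    rw [if_pos (show i < y.1.1.1 from hi), y.2.2 i hi]
  right_inv β := rfl
  map_rel_iff' {y y'} := by
    constructor
    · intro h
      exact ⟨h, fun i hi => (y.2.2 i hi).trans
        (y'.2.2 i (hi.trans h)).symm⟩
    · exact fun h => h.1

theorem isTreeOrder (κ : Cardinal.{0}) (B : Set Ordinal.{0})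
    (F : Ordinal.{0} → Ordinal.{0} → Ordinal.{0}) : IsTreeOrder (nlt κ B F) where
  trans := fun a b c h1 h2 =>
    ⟨h1.1.trans h2.1, fun i hi => (h1.2 i hi).trans (h2.2 i (hi.trans h1.1))⟩
  wo := fun t => by
    haveI : IsWellOrder _ (Subrel ((· < ·) : Ordinal.{0} → Ordinal.{0} → Prop) (Set.Iio t.1.1)) :=
      inferInstanceAs (IsWellOrder _
        (Subrel ((· < ·) : Ordinal.{0} → Ordinal.{0} → Prop) (· ∈ Set.Iio t.1.1)))
    exact (segIso t).toRelEmbedding.isWellOrder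

theorem treeRank_eq (h : IsTreeOrder (nlt κ B F)) (t : Node κ B F) :
    treeRank h t = Ordinal.lift.{1} t.1.1 := by
  have : treeRank h t = @Ordinal.type _
      (Subrel ((· < ·) : Ordinal.{0} → Ordinal.{0} → Prop) (fun x => x < t.1.1)) inferInstance := by
    exact @Quotient.sound _ _ _ _ ⟨segIso t⟩
  rw [this]
  have := Ordinal.type_subrel ((· < ·) : Ordinal.{0} → Ordinal.{0} → Prop) t.1.1
  exact this.trans (Ordinal.typein_ordinal _)

theorem power_lt_of_strongLimit {κ a b : Cardinal.{u}} (hℵ : ℵ₀ ≤ κ)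
    (hsl : κ.IsStrongLimit) (ha : a < κ) (hb : b < κ) : a ^ b < κ := by
  calc a ^ b ≤ (2 ^ a) ^ b := Cardinal.power_le_power_right (Cardinal.cantor a).le
    _ = 2 ^ (a * b) := Cardinal.power_mul.symm
    _ < κ := hsl.two_power_lt (Cardinal.mul_lt_of_lt hℵ ha hb)

end BasicModuleAux

/-- Lemma 5.2 ("the basic module"): if `κ` is weakly compact, `B ⊆ κ` has
cardinality `κ`, `⟨γ_i⟩` is a `κ`-sequence of nonzero ordinals below `κ`, and
`F_i : κ → γ_i`, then there is `B' ⊆ B` of cardinality `κ` such that each `F_i`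
is constant on a tail of `B'`. -/
theorem basic_module (κ : Cardinal.{0}) (hκ : IsWeaklyCompact κ)
    (B : Set Ordinal) (hB : B ⊆ Set.Iio κ.ord) (hBcard : #B = Cardinal.lift.{1} κ)
    (γ : Ordinal → Ordinal) (hγ : ∀ i < κ.ord, 0 < γ i ∧ γ i < κ.ord)
    (F : Ordinal → Ordinal → Ordinal) (hF : ∀ i < κ.ord, ∀ α < κ.ord, F i α < γ i) :
    ∃ B' ⊆ B, #B' = Cardinal.lift.{1} κ ∧
      ∀ i < κ.ord, ∃ η < κ.ord, ∃ ξ < γ i, ∀ α ∈ B', η ≤ α → F i α = ξ := by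
  obtain ⟨⟨hℵ, hreg, hsl⟩, htree⟩ := hκ
  have hlim : Order.IsSuccLimit κ.ord := Cardinal.isSuccLimit_ord hℵ.le
  have hub : ∀ α < κ.ord, ∃ β ∈ B, α ≤ β := by
    intro α hα
    by_contra h
    push_neg at h
    have hsub : B ⊆ Set.Iio α := fun β hβ => h β hβ
    have hle := (Cardinal.mk_le_mk_of_subset hsub).trans_eq (Ordinal.mk_Iio_ordinal α)
    rw [hBcard, Cardinal.lift_le] at hle
    exact absurd (Cardinal.lt_ord.1 hα) (not_lt.2 hle)
  have hto := BasicModuleAux.isTreeOrder κ B F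
  have hkt : IsKappaTree hto κ := by
    constructor
    · intro t
      rw [BasicModuleAux.treeRank_eq]
      exact Ordinal.lift_lt.2 t.2.1
    · intro α hα
      obtain ⟨α₀, hα₀, rfl⟩ := Ordinal.lt_lift_iff.1 hα
      have hset : {t : BasicModuleAux.Node κ B F | treeRank hto t = Ordinal.lift.{1} α₀}
          = {t | t.1.1 = α₀} := by
        ext t
        rw [Set.mem_setOf_eq, Set.mem_setOf_eq, BasicModuleAux.treeRank_eq, Ordinal.lift_inj]
      rw [hset]
      constructor
      · obtain ⟨β, hβB, hβ⟩ := hub α₀ hα₀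
        exact ⟨⟨(α₀, fun i => if i < α₀ then F i β else 0), hα₀, fun i hi => if_neg hi,
          β, hβB, hβ, fun i hi => if_pos hi⟩, rfl⟩
      · set δ := Ordinal.bsup α₀ (fun i _ => γ i) with hδdef
        have hδ : ∀ i < α₀, γ i ≤ δ := fun i hi => Ordinal.le_bsup _ i hi
        have hδκ : δ < κ.ord := Cardinal.bsup_lt_ord_of_isRegular hreg
          (Cardinal.lt_ord.1 hα₀) (fun i hi => (hγ i (hi.trans hα₀)).2)
        have hval : ∀ t : {t : BasicModuleAux.Node κ B F // t.1.1 = α₀},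
            ∀ i : Set.Iio α₀, t.1.1.2 i.1 < δ := by
          intro t i
          obtain ⟨β, hβB, hβ, hFa⟩ := t.1.2.2.2
          rw [hFa i.1 (t.2.symm ▸ i.2)]
          exact lt_of_lt_of_le (hF i.1 (i.2.trans hα₀) β (hB hβB)) (hδ i.1 i.2)
        have hinj : #{t : BasicModuleAux.Node κ B F | t.1.1 = α₀}
            ≤ #(Set.Iio α₀ → Set.Iio δ) := by
          refine Cardinal.mk_le_of_injective
            (f := fun t i => (⟨t.1.1.2 i.1, hval t i⟩ : Set.Iio δ)) ?_
          intro t t' h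
          apply Subtype.ext
          refine BasicModuleAux.node_ext (t.2.trans t'.2.symm) fun i hi => ?_
          exact congrArg Subtype.val (congrFun h ⟨i, t.2 ▸ hi⟩)
        refine hinj.trans_lt ?_
        rw [← Cardinal.power_def, Ordinal.mk_Iio_ordinal, Ordinal.mk_Iio_ordinal,
          ← Cardinal.lift_power, Cardinal.lift_lt]
        exact BasicModuleAux.power_lt_of_strongLimit hℵ.le hsl
          (Cardinal.lt_ord.1 hδκ) (Cardinal.lt_ord.1 hα₀)
  obtain ⟨b, hbdc, hbl⟩ := htree _ _ hto hkt
  have hbl' : ∀ η : Set.Iio κ.ord,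
      ∃ t, (t ∈ b ∧ treeRank hto t = Ordinal.lift.{1} η.1) ∧
        ∀ y, (y ∈ b ∧ treeRank hto y = Ordinal.lift.{1} η.1) → y = t :=
    fun η => hbl (Ordinal.lift.{1} η.1) (Ordinal.lift_lt.2 η.2)
  choose tn htn using hbl'
  have hfst : ∀ η : Set.Iio κ.ord, (tn η).1.1 = η.1 := fun η =>
    Ordinal.lift_inj.1 (by rw [← BasicModuleAux.treeRank_eq hto (tn η), (htn η).1.2])
  have hcoh : ∀ η η' : Set.Iio κ.ord, η.1 ≤ η'.1 →
      ∀ i < η.1, (tn η).1.2 i = (tn η').1.2 i := by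
    intro η η' hle i hi
    rcases eq_or_lt_of_le hle with heq | hlt
    · have hη : tn η' = tn η := (htn η).2 (tn η') ⟨(htn η').1.1, by rw [(htn η').1.2, heq]⟩
      rw [hη]
    · have hlt' : η.1 < (tn η').1.1 := by rw [hfst η']; exact hlt
      have hsb : BasicModuleAux.restrictNode (tn η') η.1 hlt' ∈ b :=
        hbdc (tn η') (htn η').1.1 _ (BasicModuleAux.restrictNode_lt _ _ _)
      have hkey : BasicModuleAux.restrictNode (tn η') η.1 hlt' = tn η :=
        (htn η).2 _ ⟨hsb, BasicModuleAux.treeRank_eq hto _⟩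
      rw [← hkey]
      show (if i < η.1 then (tn η').1.2 i else 0) = (tn η').1.2 i
      rw [if_pos hi]
  classical
  set A : Set.Iio κ.ord → Set Ordinal := fun η =>
    {β | β ∈ B ∧ η.1 ≤ β ∧ ∀ i < η.1, F i β = (tn η).1.2 i} with hA
  have hAne : ∀ η, (A η).Nonempty := by
    intro η
    obtain ⟨β, hβB, hβ, hFa⟩ := (tn η).2.2.2
    exact ⟨β, hβB, hfst η ▸ hβ, fun i hi => (hFa i (by rw [hfst η]; exact hi)).symm⟩
  have hAmono : ∀ η η' : Set.Iio κ.ord, η.1 ≤ η'.1 → A η' ⊆ A η := by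
    rintro η η' hle β ⟨hβB, hβ, hFa⟩
    exact ⟨hβB, le_trans hle hβ, fun i hi => (hFa i (lt_of_lt_of_le hi hle)).trans
      (hcoh η η' hle i hi).symm⟩
  set g : Set.Iio κ.ord → Ordinal := fun η => sInf (A η) with hg
  have hgA : ∀ η, g η ∈ A η := fun η => csInf_mem (hAne η)
  have hgmono : ∀ η η' : Set.Iio κ.ord, η.1 ≤ η'.1 → g η ≤ g η' := fun η η' hle =>
    csInf_le_csInf (OrderBot.bddBelow _) (hAne η') (hAmono η η' hle)
  have hsub : Set.range g ⊆ Set.Iio κ.ord := by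
    rintro β ⟨η, rfl⟩
    exact hB (hgA η).1
  refine ⟨Set.range g, ?_, ?_, ?_⟩
  · rintro β ⟨η, rfl⟩
    exact (hgA η).1
  · apply le_antisymm
    · exact (Cardinal.mk_le_mk_of_subset hsub).trans_eq
        (by rw [Ordinal.mk_Iio_ordinal, Cardinal.card_ord])
    · by_contra hltc
      rw [not_le] at hltc
      have hSle : #{x : Set.Iio κ.ord | x.1 ∈ Set.range g} ≤ #(Set.range g) :=
        Cardinal.mk_preimage_of_injective Subtype.val (Set.range g) Subtype.val_injective
      have hcof : #{x : Set.Iio κ.ord | x.1 ∈ Set.range g} <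
          Order.cof (Set.Iio κ.ord) := by
        rw [Ordinal.cof_Iio, ← Ordinal.lift_cof, hreg.cof_eq]
        exact hSle.trans_lt hltc
      have hnc : ¬ IsCofinal {x : Set.Iio κ.ord | x.1 ∈ Set.range g} :=
        fun h => absurd (Order.cof_le h) (not_le.2 hcof)
      simp only [IsCofinal, not_forall, not_exists, not_and, not_le] at hnc
      obtain ⟨a, ha⟩ := hnc
      have hga := ha ⟨g a, hsub ⟨a, rfl⟩⟩ ⟨a, rfl⟩
      exact absurd ((hgA a).2.1.trans_lt hga) (lt_irrefl _)
  · intro i hi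
    have hsi : Order.succ i < κ.ord := hlim.succ_lt hi
    have hgκ : g ⟨Order.succ i, hsi⟩ < κ.ord := hB (hgA ⟨Order.succ i, hsi⟩).1
    refine ⟨Order.succ (g ⟨Order.succ i, hsi⟩), hlim.succ_lt hgκ,
      (tn ⟨Order.succ i, hsi⟩).1.2 i, ?_, ?_⟩
    · obtain ⟨hβB, hβ, hFa⟩ := hgA ⟨Order.succ i, hsi⟩
      rw [← hFa i (Order.lt_succ i)]
      exact hF i hi _ (hB hβB)
    · rintro α ⟨η, rfl⟩ hle
      have hlt3 : Order.succ i ≤ η.1 := le_of_not_ge fun h2 =>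
        absurd (hgmono η ⟨Order.succ i, hsi⟩ h2) (not_le.2 (Order.succ_le_iff.1 hle))
      exact (hAmono ⟨Order.succ i, hsi⟩ η hlt3 (hgA η)).2.2 i (Order.lt_succ i)
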